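/- Let f and φ be differentiable convex functions on a convex set C with φ strictly convex. Then Lφ − f is convex on the relative interior of C if and only if f(x) ≤ f(y) + ⟨∇f(y), x − y⟩ + L·D_φ(x,y) for all x, y in the relative interior of C, where D_φ is the Bregman divergence of φ. -/

import Mathlib

open scoped RealInnerProductSpace

section Aux

variable {V : Type*} [NormedAddCommGroup V] [InnerProductSpace ℝ V] [CompleteSpace V]

omit [CompleteSpace V] in
lemma aux_mem_intrinsicInterior_iff {C : Set V} {x : V} :
    x ∈ intrinsicInterior ℝ C ↔
      x ∈ affineSpan ℝ C ∧ ∃ ε > 0, Metric.ball x ε ∩ (affineSpan ℝ C : Set V) ⊆ C := by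
  constructor
  · rintro ⟨x', hx', rfl⟩
    refine ⟨x'.2, ?_⟩
    rw [mem_interior_iff_mem_nhds, nhds_induced, Filter.mem_comap] at hx'
    obtain ⟨t, ht, hsub⟩ := hx'
    obtain ⟨ε, hε, hball⟩ := Metric.mem_nhds_iff.mp ht
    refine ⟨ε, hε, ?_⟩
    rintro v ⟨hv1, hv2⟩
    exact hsub (show (⟨v, hv2⟩ : affineSpan ℝ C) ∈ Subtype.val ⁻¹' t from hball hv1)
  · rintro ⟨hxA, ε, hε, hsub⟩
    refine ⟨⟨x, hxA⟩, ?_, rfl⟩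
    rw [mem_interior_iff_mem_nhds, nhds_induced, Filter.mem_comap]
    exact ⟨Metric.ball x ε, Metric.ball_mem_nhds x hε,
      fun p hp => hsub ⟨hp, p.2⟩⟩

omit [CompleteSpace V] in
lemma aux_convex_intrinsicInterior {C : Set V} (hC : Convex ℝ C) :
    Convex ℝ (intrinsicInterior ℝ C) := by
  intro x hx y hy a b ha hb hab
  rw [aux_mem_intrinsicInterior_iff] at hx hy ⊢
  obtain ⟨hxA, εx, hεx, hx⟩ := hx
  obtain ⟨hyA, εy, hεy, hy⟩ := hy
  have hzA : a • x + b • y ∈ affineSpan ℝ C := (affineSpan ℝ C).convex hxA hyA ha hb hab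
  refine ⟨hzA, min εx εy, lt_min hεx hεy, ?_⟩
  rintro w ⟨hw1, hw2⟩
  set z := a • x + b • y with hzdef
  have hu : w - z ∈ (affineSpan ℝ C).direction := by
    have := AffineSubspace.vsub_mem_direction hw2 hzA
    simpa using this
  have hdist : ‖w - z‖ < min εx εy := by
    rw [Metric.mem_ball, dist_eq_norm] at hw1
    exact hw1
  have hxC : x + (w - z) ∈ C := by
    refine hx ⟨?_, ?_⟩
    · rw [Metric.mem_ball, dist_eq_norm]
      simpa using lt_of_lt_of_le hdist (min_le_left _ _)
    · have := AffineSubspace.vadd_mem_of_mem_direction hu hxA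
      simpa [add_comm] using this
  have hyC : y + (w - z) ∈ C := by
    refine hy ⟨?_, ?_⟩
    · rw [Metric.mem_ball, dist_eq_norm]
      simpa using lt_of_lt_of_le hdist (min_le_right _ _)
    · have := AffineSubspace.vadd_mem_of_mem_direction hu hyA
      simpa [add_comm] using this
  have hw : a • (x + (w - z)) + b • (y + (w - z)) = w := by
    rw [smul_add, smul_add]
    have h1 : a • (w - z) + b • (w - z) = w - z := by
      rw [← add_smul, hab, one_smul]
    calc a • x + a • (w - z) + (b • y + b • (w - z))
        = (a • x + b • y) + (a • (w - z) + b • (w - z)) := by abel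
      _ = z + (w - z) := by rw [← hzdef, h1]
      _ = w := by abel
  have := hC hxC hyC ha hb hab
  rwa [hw] at this

lemma aux_inner_gradient (h : V → ℝ) (y v : V) :
    ⟪gradient h y, v⟫ = fderiv ℝ h y v := by
  rw [gradient, ← InnerProductSpace.toDual_apply_apply, LinearIsometryEquiv.apply_symm_apply]

lemma aux_convexOn_iff_grad {s : Set V} (hs : Convex ℝ s) {g : V → ℝ}
    (hg : Differentiable ℝ g) :
    ConvexOn ℝ s g ↔ ∀ x ∈ s, ∀ y ∈ s, g y + ⟪gradient g y, x - y⟫ ≤ g x := by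
  constructor
  · intro hcvx x hx y hy
    rw [aux_inner_gradient]
    set h : ℝ → ℝ := fun t => g (y + t • (x - y)) with hdef
    have hline : HasDerivAt (fun t : ℝ => y + t • (x - y)) (x - y) 0 := by
      simpa using ((hasDerivAt_id (0 : ℝ)).smul_const (x - y)).const_add y
    have hcomp : HasDerivAt h (fderiv ℝ g y (x - y)) 0 := by
      have := (hg (y + (0 : ℝ) • (x - y))).hasFDerivAt.comp_hasDerivAt 0 hline
      simpa [hdef, Function.comp_def] using this
    have htend : Filter.Tendsto (slope h 0) (nhdsWithin 0 (Set.Ioi 0))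
        (nhds (fderiv ℝ g y (x - y))) :=
      (hasDerivAt_iff_tendsto_slope.mp hcomp).mono_left
        (nhdsWithin_mono 0 (fun t ht => ne_of_gt ht))
    have hbound : ∀ᶠ t in nhdsWithin (0 : ℝ) (Set.Ioi 0), slope h 0 t ≤ g x - g y := by
      filter_upwards [Ioc_mem_nhdsGT_of_mem (Set.mem_Ico.mpr ⟨le_refl (0 : ℝ), zero_lt_one⟩)]
        with t ht
      obtain ⟨ht0, ht1⟩ := ht
      have hconv : h t ≤ (1 - t) * g y + t * g x := by
        have hpt : y + t • (x - y) = (1 - t) • y + t • x := by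
          rw [smul_sub, sub_smul, one_smul]; abel
        have := hcvx.2 hy hx (by linarith : (0:ℝ) ≤ 1 - t) ht0.le (by ring)
        simpa [hdef, hpt, smul_eq_mul] using this
      have h0 : h 0 = g y := by simp [hdef]
      rw [slope_def_field, sub_zero, div_le_iff₀ ht0]
      nlinarith [hconv, h0]
    have hled : fderiv ℝ g y (x - y) ≤ g x - g y := le_of_tendsto htend hbound
    linarith
  · intro H
    refine ⟨hs, ?_⟩
    intro x hx y hy a b ha hb hab
    have hz : a • x + b • y ∈ s := hs hx hy ha hb hab
    set z := a • x + b • y with hzdef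
    have h1 := H x hx z hz
    have h2 := H y hy z hz
    set I1 := ⟪gradient g z, x - z⟫ with hI1
    set I2 := ⟪gradient g z, y - z⟫ with hI2
    have key : a * I1 + b * I2 = 0 := by
      rw [hI1, hI2]
      obtain rfl : b = 1 - a := by linarith
      simp only [hzdef, inner_sub_right, inner_add_right, real_inner_smul_right]
      ring
    have e1 : a * (g z + I1) ≤ a * g x := mul_le_mul_of_nonneg_left h1 ha
    have e2 : b * (g z + I2) ≤ b * g y := mul_le_mul_of_nonneg_left h2 hb
    have : g z ≤ a * g x + b * g y := by
      calc g z = a * (g z + I1) + b * (g z + I2) := by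
            linear_combination (-(g z)) * hab - key
        _ ≤ a * g x + b * g y := add_le_add e1 e2
    simpa [smul_eq_mul] using this

end Aux

/-- Relative smoothness (`Lφ − f` convex on the relative interior of `C`) is equivalent
to the descent-lemma-type inequality `f(x) ≤ f(y) + ⟨∇f(y), x − y⟩ + L·D_φ(x,y)`. -/
theorem stmt_1 {V : Type*} [NormedAddCommGroup V] [InnerProductSpace ℝ V]
    [FiniteDimensional ℝ V]
    (C : Set V) (hC : Convex ℝ C) (f φ : V → ℝ)
    (hf : Differentiable ℝ f) (hφ : Differentiable ℝ φ)
    (hfc : ConvexOn ℝ C f) (hφc : StrictConvexOn ℝ C φ) (L : ℝ) :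
    ConvexOn ℝ (intrinsicInterior ℝ C) (fun x => L * φ x - f x) ↔
      ∀ x ∈ intrinsicInterior ℝ C, ∀ y ∈ intrinsicInterior ℝ C,
        f x ≤ f y + ⟪gradient f y, x - y⟫ +
          L * (φ x - φ y - ⟪gradient φ y, x - y⟫) := by
  set g : V → ℝ := fun x => L * φ x - f x with hgdef
  have hg : Differentiable ℝ g := (hφ.const_mul L).sub hf
  have hgrad : ∀ y v : V, ⟪gradient g y, v⟫ =
      L * ⟪gradient φ y, v⟫ - ⟪gradient f y, v⟫ := by
    intro y v
    rw [aux_inner_gradient, aux_inner_gradient, aux_inner_gradient]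
    have hfd : fderiv ℝ g y = L • fderiv ℝ φ y - fderiv ℝ f y := by
      rw [hgdef]
      rw [fderiv_fun_sub ((hφ y).const_mul L) (hf y), fderiv_const_mul (hφ y) L]
    rw [hfd]
    simp [smul_eq_mul]
  rw [aux_convexOn_iff_grad (aux_convex_intrinsicInterior hC) hg]
  constructor
  · intro H x hx y hy
    have := H x hx y hy
    rw [hgrad] at this
    simp only [hgdef] at this
    linarith
  · intro H x hx y hy
    have := H x hx y hy
    rw [hgrad]
    simp only [hgdef]
    linarith
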